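/- arXiv:2502.11173 — 2 statements merged into one kernel-verified Lean document; each statement's English description precedes it below -/
import Mathlib

section
/- Let θ, δ ∈ ℝ and set a = sin²(θ). Then |sin²(θ + δ) − sin²(θ)| ≤ 2|δ|·√(a(1 − a)) + δ². In particular, taking |δ| ≤ π/t for a positive integer t yields the error bound |ã − a| ≤ 2π√(a(1−a))/t + π²/t² of amplitude estimation with t iterations. -/
open Real

lemma sqrt_aa (θ : ℝ) :
    Real.sqrt (sin θ ^ 2 * (1 - sin θ ^ 2)) = |sin θ * cos θ| := by
  have h : sin θ ^ 2 * (1 - sin θ ^ 2) = (sin θ * cos θ) ^ 2 := by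
    have := sin_sq_add_cos_sq θ; nlinarith
  rw [h, Real.sqrt_sq_eq_abs]

/-- Trigonometric perturbation bound behind the amplitude-estimation error
bound: for `a = sin² θ`, `|sin²(θ + δ) − sin² θ| ≤ 2|δ|√(a(1−a)) + δ²`; and
in particular, for a positive integer `t` and `|δ| ≤ π/t`, the amplitude
estimate `ã = sin²(θ + δ)` satisfies `|ã − a| ≤ 2π√(a(1−a))/t + π²/t²`. -/
theorem amplitude_estimation_error_bound (θ δ : ℝ) (a : ℝ) (ha : a = sin θ ^ 2) :
    |sin (θ + δ) ^ 2 - sin θ ^ 2| ≤ 2 * |δ| * Real.sqrt (a * (1 - a)) + δ ^ 2 ∧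
    (∀ t : ℕ, 0 < t → |δ| ≤ π / t →
      |sin (θ + δ) ^ 2 - a| ≤
        2 * π * Real.sqrt (a * (1 - a)) / t + π ^ 2 / t ^ 2) := by
  subst ha
  have hs : Real.sqrt (sin θ ^ 2 * (1 - sin θ ^ 2)) = |sin θ * cos θ| := sqrt_aa θ
  have key : |sin (θ + δ) ^ 2 - sin θ ^ 2| ≤
      2 * |δ| * Real.sqrt (sin θ ^ 2 * (1 - sin θ ^ 2)) + δ ^ 2 := by
    have hfac : sin (θ + δ) ^ 2 - sin θ ^ 2 =
        (2 * (sin θ * cos θ) * cos δ + (1 - 2 * sin θ ^ 2) * sin δ) * sin δ := by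
      have h1 := sin_sq_add_cos_sq θ
      have h2 := sin_sq_add_cos_sq δ
      rw [sin_add]; ring_nf; nlinarith [sin_add θ δ]
    rw [hfac, hs]
    have hcosδ : |cos δ| ≤ 1 := abs_cos_le_one δ
    have hsinδ : |sin δ| ≤ |δ| := Real.abs_sin_le_abs
    have hcos2 : |1 - 2 * sin θ ^ 2| ≤ 1 := by
      have := sin_sq_add_cos_sq θ
      rw [abs_le]; constructor <;> nlinarith
    have a1 : |2 * (sin θ * cos θ) * cos δ| ≤ 2 * |sin θ * cos θ| := by
      rw [abs_mul, abs_mul, abs_two]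
      nlinarith [abs_nonneg (sin θ * cos θ)]
    have a2 : |(1 - 2 * sin θ ^ 2) * sin δ| ≤ |δ| := by
      rw [abs_mul]
      nlinarith [abs_nonneg (sin δ), abs_nonneg δ]
    have hX : |2 * (sin θ * cos θ) * cos δ + (1 - 2 * sin θ ^ 2) * sin δ| ≤
        2 * |sin θ * cos θ| + |δ| :=
      (abs_add_le _ _).trans (add_le_add a1 a2)
    calc |(2 * (sin θ * cos θ) * cos δ + (1 - 2 * sin θ ^ 2) * sin δ) * sin δ|
        = |2 * (sin θ * cos θ) * cos δ + (1 - 2 * sin θ ^ 2) * sin δ| * |sin δ| :=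
          abs_mul _ _
      _ ≤ (2 * |sin θ * cos θ| + |δ|) * |δ| := by
          apply mul_le_mul hX hsinδ (abs_nonneg _)
          positivity
      _ = 2 * |δ| * |sin θ * cos θ| + δ ^ 2 := by
          rw [← sq_abs δ]; ring
  refine ⟨key, fun t ht hδ => ?_⟩
  have hsnn : (0:ℝ) ≤ Real.sqrt (sin θ ^ 2 * (1 - sin θ ^ 2)) := Real.sqrt_nonneg _
  have htpos : (0:ℝ) < t := by exact_mod_cast ht
  have hδ2 : δ ^ 2 ≤ π ^ 2 / t ^ 2 := by
    have := pow_le_pow_left₀ (abs_nonneg δ) hδ 2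
    rwa [sq_abs, div_pow] at this
  calc |sin (θ + δ) ^ 2 - sin θ ^ 2|
      ≤ 2 * |δ| * Real.sqrt (sin θ ^ 2 * (1 - sin θ ^ 2)) + δ ^ 2 := key
    _ ≤ 2 * (π / t) * Real.sqrt (sin θ ^ 2 * (1 - sin θ ^ 2)) + π ^ 2 / t ^ 2 := by
        gcongr
    _ = 2 * π * Real.sqrt (sin θ ^ 2 * (1 - sin θ ^ 2)) / t + π ^ 2 / t ^ 2 := by ring
end

section
/- Let e_1, …, e_k ∈ ℝ^d be orthonormal and let ē_1, …, ē_k ∈ ℝ^d be unit vectors with ‖ē_i − e_i‖₂ ≤ δ for all i, where δ ≥ 0. Then for every z ∈ ℝ^d, | ‖z − Σ_{i=1}^k ⟨ē_i, z⟩ ē_i‖ − ‖z − Σ_{i=1}^k ⟨e_i, z⟩ e_i‖ | ≤ k·δ·(2 + δ)·‖z‖. -/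
open scoped RealInnerProductSpace

/-- Perturbation of the reconstruction-loss anomaly score: if the orthonormal
principal components `eᵢ` are replaced by unit-norm estimates `ēᵢ` with
`‖ēᵢ − eᵢ‖ ≤ δ`, the reconstruction error changes by at most
`k·δ·(2 + δ)·‖z‖`. -/
theorem reconstruction_loss_perturbation
    (d k : ℕ) (e ebar : Fin k → EuclideanSpace ℝ (Fin d))
    (δ : ℝ) (hδ : 0 ≤ δ)
    (horth : Orthonormal ℝ e)
    (hunit : ∀ i, ‖ebar i‖ = 1)
    (hclose : ∀ i, ‖ebar i - e i‖ ≤ δ) :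
    ∀ z : EuclideanSpace ℝ (Fin d),
      |‖z - (∑ i, ⟪ebar i, z⟫ • ebar i)‖ - ‖z - (∑ i, ⟪e i, z⟫ • e i)‖| ≤
        k * δ * (2 + δ) * ‖z‖ := by
  intro z
  have key : ∀ i : Fin k,
      ‖(⟪e i, z⟫ • e i) - (⟪ebar i, z⟫ • ebar i)‖ ≤ δ * (2 + δ) * ‖z‖ := by
    intro i
    have hdecomp : (⟪e i, z⟫ • e i) - (⟪ebar i, z⟫ • ebar i)
        = (⟪e i - ebar i, z⟫ • e i) + (⟪ebar i, z⟫ • (e i - ebar i)) := by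
      simp [inner_sub_left, sub_smul, smul_sub]
    have h1 : ‖(⟪e i - ebar i, z⟫ : ℝ) • e i‖ ≤ δ * ‖z‖ := by
      rw [norm_smul, Real.norm_eq_abs, horth.1 i, mul_one]
      calc |⟪e i - ebar i, z⟫| ≤ ‖e i - ebar i‖ * ‖z‖ := abs_real_inner_le_norm _ _
        _ ≤ δ * ‖z‖ := by
            apply mul_le_mul_of_nonneg_right _ (norm_nonneg z)
            rw [← neg_sub, norm_neg]; exact hclose i
    have h2 : ‖(⟪ebar i, z⟫ : ℝ) • (e i - ebar i)‖ ≤ δ * ‖z‖ := by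
      rw [norm_smul, Real.norm_eq_abs]
      have h2a : |⟪ebar i, z⟫| ≤ ‖z‖ := by
        calc |⟪ebar i, z⟫| ≤ ‖ebar i‖ * ‖z‖ := abs_real_inner_le_norm _ _
          _ = ‖z‖ := by rw [hunit i, one_mul]
      have h2b : ‖e i - ebar i‖ ≤ δ := by rw [← neg_sub, norm_neg]; exact hclose i
      calc |⟪ebar i, z⟫| * ‖e i - ebar i‖ ≤ ‖z‖ * δ :=
            mul_le_mul h2a h2b (norm_nonneg _) (norm_nonneg _)
        _ = δ * ‖z‖ := mul_comm _ _
    calc ‖(⟪e i, z⟫ • e i) - (⟪ebar i, z⟫ • ebar i)‖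
        ≤ ‖(⟪e i - ebar i, z⟫ : ℝ) • e i‖ + ‖(⟪ebar i, z⟫ : ℝ) • (e i - ebar i)‖ := by
          rw [hdecomp]; exact norm_add_le _ _
      _ ≤ δ * ‖z‖ + δ * ‖z‖ := add_le_add h1 h2
      _ ≤ δ * (2 + δ) * ‖z‖ := by nlinarith [mul_nonneg (mul_nonneg hδ hδ) (norm_nonneg z)]
  calc |‖z - (∑ i, ⟪ebar i, z⟫ • ebar i)‖ - ‖z - (∑ i, ⟪e i, z⟫ • e i)‖|
      ≤ ‖(z - (∑ i, ⟪ebar i, z⟫ • ebar i)) - (z - (∑ i, ⟪e i, z⟫ • e i))‖ :=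
        abs_norm_sub_norm_le _ _
    _ = ‖∑ i, ((⟪e i, z⟫ • e i) - (⟪ebar i, z⟫ • ebar i))‖ := by
        rw [Finset.sum_sub_distrib]; congr 1; abel
    _ ≤ ∑ i, ‖(⟪e i, z⟫ • e i) - (⟪ebar i, z⟫ • ebar i)‖ := norm_sum_le _ _
    _ ≤ ∑ _i : Fin k, δ * (2 + δ) * ‖z‖ := Finset.sum_le_sum fun i _ => key i
    _ = k * δ * (2 + δ) * ‖z‖ := by
        simp [Finset.sum_const, Finset.card_univ]; ring
end
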